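/- Let d ∈ ℕ, let A be a real d × d matrix and let a₁, a₂ ≥ 0. Then the function ξ ↦ (1 − e^{−a₁|Aξ|})(1 − e^{−a₂|Aξ|}) is a variogram on ℝ^d. -/

import Mathlib

open scoped BigOperators

open MeasureTheory Real Set Finset Nat

namespace VariogramProof
lemma img_inv (β : ℝ) (hβ : 0 < β) : (fun u : ℝ => β/u) '' (Set.Ioi 0) = Set.Ioi 0 := by
  ext y
  constructor
  · rintro ⟨u, hu, rfl⟩; exact div_pos hβ hu
  · intro hy
    exact ⟨β/y, div_pos hβ hy, by field_simp⟩

lemma inj_inv (β : ℝ) (hβ : 0 < β) : InjOn (fun u : ℝ => β/u) (Set.Ioi 0) := by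
  intro u1 h1 u2 h2 h
  simp only [Set.mem_Ioi] at h1 h2
  field_simp at h
  rcases h with h | h
  rfl

lemma hasDeriv_inv_fun (β u : ℝ) (hu : 0 < u) :
    HasDerivWithinAt (fun u : ℝ => β/u) (-(β/u^2)) (Set.Ioi 0) u := by
  have := ((hasDerivAt_inv (ne_of_gt hu)).const_mul β)
  have h2 : β * -(u^2)⁻¹ = -(β/u^2) := by field_simp
  simpa [div_eq_mul_inv, h2] using this.hasDerivWithinAt

lemma img_sub (β : ℝ) (hβ : 0 < β) : (fun u : ℝ => u - β/u) '' (Set.Ioi 0) = univ := by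
  ext y
  simp only [mem_univ, iff_true]
  refine ⟨(y + Real.sqrt (y^2 + 4*β))/2, ?_, ?_⟩
  · have h1 : |y| < Real.sqrt (y^2 + 4*β) := by
      rw [← Real.sqrt_sq_eq_abs]
      exact Real.sqrt_lt_sqrt (sq_nonneg y) (by linarith)
    have := abs_nonneg y
    have := neg_abs_le y
    simp only [Set.mem_Ioi]
    linarith
  · have hs : Real.sqrt (y^2 + 4*β) ^ 2 = y^2 + 4*β := Real.sq_sqrt (by positivity)
    set s := Real.sqrt (y^2+4*β)
    have h1 : |y| < s := by
      rw [← Real.sqrt_sq_eq_abs]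
      exact Real.sqrt_lt_sqrt (sq_nonneg y) (by linarith)
    have hu : 0 < (y + s)/2 := by
      have := neg_abs_le y; linarith
    have hne : y + s ≠ 0 := by intro h; rw [h] at hu; simp at hu
    field_simp
    nlinarith

lemma inj_sub (β : ℝ) (hβ : 0 < β) : InjOn (fun u : ℝ => u - β/u) (Set.Ioi 0) := by
  apply StrictMonoOn.injOn
  intro u1 h1 u2 h2 h
  simp only [Set.mem_Ioi] at h1 h2
  have : β/u2 < β/u1 := div_lt_div_of_pos_left hβ h1 h
  simp only
  linarith

lemma deriv_sub' (β u : ℝ) (hu : 0 < u) :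
    HasDerivWithinAt (fun u : ℝ => u - β/u) (1 + β/u^2) (Set.Ioi 0) u := by
  have h1 := (hasDerivAt_id u).fun_sub ((hasDerivAt_inv (ne_of_gt hu)).const_mul β)
  have h2 : 1 - β * -(u^2)⁻¹ = 1 + β/u^2 := by field_simp; ring
  simpa [div_eq_mul_inv, h2] using h1.hasDerivWithinAt

-- integrability of the symmetrized Gaussian
lemma glA_integrable (β : ℝ) (hβ : 0 < β) :
    IntegrableOn (fun u : ℝ => Real.exp (-(u - β/u)^2)) (Set.Ioi 0) := by
  have hb : Integrable (fun u : ℝ => Real.exp (2*β) * Real.exp (-1*u^2)) :=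
    (integrable_exp_neg_mul_sq one_pos).const_mul _
  refine Integrable.mono' (hb.integrableOn) ?_ ?_
  · apply ContinuousOn.aestronglyMeasurable ?_ measurableSet_Ioi
    apply (Continuous.continuousOn (by continuity) : ContinuousOn (fun t : ℝ => Real.exp (-(t^2))) univ).comp
      (f := fun u : ℝ => u - β/u)
    · exact (continuousOn_id.sub ((continuousOn_const.div continuousOn_id) (fun x hx => ne_of_gt hx)))
    · intro x _; trivial
  · refine (ae_restrict_iff' measurableSet_Ioi).2 (Filter.Eventually.of_forall fun u hu => ?_)
    rw [Real.norm_eq_abs, abs_of_pos (Real.exp_pos _), ← Real.exp_add]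
    apply Real.exp_le_exp.2
    have hu0 : u ≠ 0 := ne_of_gt hu
    have : (u - β/u)^2 = u^2 - 2*β + β^2/u^2 := by field_simp; ring
    have h2 : 0 ≤ β^2/u^2 := by positivity
    nlinarith

lemma glasser (β : ℝ) (hβ : 0 ≤ β) :
    ∫ u in Set.Ioi (0:ℝ), Real.exp (-(u^2) - β^2/u^2) = Real.sqrt π / 2 * Real.exp (-(2*β)) := by
  rcases eq_or_lt_of_le hβ with rfl | hβ
  · simp only [ne_eq, zero_pow, mul_zero, neg_zero, Real.exp_zero, mul_one]
    rw [show (fun u : ℝ => Real.exp (-(u^2) - 0^2/u^2)) = fun u : ℝ => Real.exp (-1*u^2) by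
      funext u; norm_num]
    rw [integral_gaussian_Ioi 1]
    norm_num
  · set G : ℝ → ℝ := fun u => Real.exp (-(u - β/u)^2) with hG
    have hA : IntegrableOn G (Set.Ioi 0) := glA_integrable β hβ
    -- B integrable
    have hBiff := integrableOn_image_iff_integrableOn_abs_deriv_smul measurableSet_Ioi
      (fun x hx => hasDeriv_inv_fun β x hx) (inj_inv β hβ) G
    rw [img_inv β hβ] at hBiff
    have hGinv : ∀ u : ℝ, u ∈ Set.Ioi (0:ℝ) → |(-(β/u^2))| • G (β/u) = β/u^2 * G u := by
      intro u hu
      simp only [Set.mem_Ioi] at hu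
      have h1 : |(-(β/u^2))| = β/u^2 := by
        rw [abs_neg, abs_of_pos (by positivity)]
      have h2 : G (β/u) = G u := by
        simp only [hG]
        congr 1
        have : β/(β/u) = u := by field_simp
        rw [this]
        ring
      rw [h1, h2, smul_eq_mul]
    have hBint : IntegrableOn (fun u : ℝ => β/u^2 * G u) (Set.Ioi 0) := by
      refine IntegrableOn.congr_fun (hBiff.1 hA) hGinv measurableSet_Ioi
    -- B = A
    have hBA : ∫ u in Set.Ioi (0:ℝ), β/u^2 * G u = ∫ u in Set.Ioi (0:ℝ), G u := by
      have := integral_image_eq_integral_abs_deriv_smul measurableSet_Ioi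
        (fun x hx => hasDeriv_inv_fun β x hx) (inj_inv β hβ) G
      rw [img_inv β hβ] at this
      rw [this]
      exact setIntegral_congr_fun measurableSet_Ioi (fun u hu => (hGinv u hu).symm)
    -- total
    have htot : ∫ u in Set.Ioi (0:ℝ), (1 + β/u^2) * G u = Real.sqrt π := by
      have := integral_image_eq_integral_abs_deriv_smul measurableSet_Ioi
        (fun x hx => deriv_sub' β x hx) (inj_sub β hβ) (fun t => Real.exp (-t^2))
      rw [img_sub β hβ, setIntegral_univ] at this
      have hL : ∫ x : ℝ, Real.exp (-x^2) = Real.sqrt π := by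
        rw [show (fun x : ℝ => Real.exp (-x^2)) = fun x : ℝ => Real.exp (-1*x^2) by
          funext x; norm_num]
        rw [integral_gaussian 1]
        norm_num
      rw [hL] at this
      rw [this]
      refine setIntegral_congr_fun measurableSet_Ioi fun u hu => ?_
      simp only [Set.mem_Ioi] at hu
      rw [smul_eq_mul, abs_of_pos (by positivity)]
    have hsplit : ∫ u in Set.Ioi (0:ℝ), (1 + β/u^2) * G u
        = (∫ u in Set.Ioi (0:ℝ), G u) + ∫ u in Set.Ioi (0:ℝ), β/u^2 * G u := by
      rw [← integral_add hA hBint]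
      refine setIntegral_congr_fun measurableSet_Ioi fun u hu => by ring
    have hAval : ∫ u in Set.Ioi (0:ℝ), G u = Real.sqrt π / 2 := by
      rw [hsplit, hBA] at htot
      linarith
    have : ∫ u in Set.Ioi (0:ℝ), Real.exp (-(u^2) - β^2/u^2)
        = ∫ u in Set.Ioi (0:ℝ), Real.exp (-(2*β)) * G u := by
      refine setIntegral_congr_fun measurableSet_Ioi fun u hu => ?_
      simp only [Set.mem_Ioi] at hu
      rw [hG, ← Real.exp_add]
      congr 1
      have hu0 : u ≠ 0 := ne_of_gt hu
      field_simp
      ring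
    rw [this, MeasureTheory.integral_const_mul, hAval]
    ring

noncomputable def Dker (c s : ℝ) : ℝ := c / (2*Real.sqrt π*(s*Real.sqrt s)) * Real.exp (-(c^2/(4*s)))

lemma gl_integrable (β : ℝ) (hβ : 0 ≤ β) :
    IntegrableOn (fun u : ℝ => Real.exp (-(u^2) - β^2/u^2)) (Set.Ioi 0) := by
  rcases eq_or_lt_of_le hβ with rfl | hβ
  · have : (fun u : ℝ => Real.exp (-(u^2) - (0:ℝ)^2/u^2)) = fun u : ℝ => Real.exp (-1*u^2) := by
      funext u; norm_num
    rw [this]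
    exact (integrable_exp_neg_mul_sq one_pos).integrableOn
  · refine ((glA_integrable β hβ).const_mul (Real.exp (-(2*β)))).congr
      (((ae_restrict_iff' measurableSet_Ioi).2 (Filter.Eventually.of_forall fun u hu => ?_)))
    simp only [Set.mem_Ioi] at hu
    show Real.exp (-(2*β)) * Real.exp (-(u-β/u)^2) = Real.exp (-(u^2) - β^2/u^2)
    rw [← Real.exp_add]
    congr 1
    have hu0 : u ≠ 0 := ne_of_gt hu
    field_simp
    ring

-- substitution map facts
lemma img_sq (c : ℝ) (hc : 0 < c) : (fun u : ℝ => c^2/(4*u^2)) '' (Set.Ioi 0) = Set.Ioi 0 := by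
  ext s
  constructor
  · rintro ⟨u, hu, rfl⟩
    simp only [Set.mem_Ioi] at hu ⊢
    positivity
  · intro hs
    simp only [Set.mem_Ioi] at hs
    have hss : 0 < Real.sqrt s := Real.sqrt_pos.2 hs
    refine ⟨c/(2*Real.sqrt s), by simp only [Set.mem_Ioi]; positivity, ?_⟩
    have h1 : Real.sqrt s ^ 2 = s := Real.sq_sqrt (le_of_lt hs)
    have h2 : Real.sqrt s ≠ 0 := by positivity
    field_simp
    nlinarith
lemma inj_sq (c : ℝ) (hc : 0 < c) : InjOn (fun u : ℝ => c^2/(4*u^2)) (Set.Ioi 0) := by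
  intro u1 h1 u2 h2 h
  simp only [Set.mem_Ioi] at h1 h2
  have hc2 : c^2 ≠ 0 := by positivity
  field_simp at h
  nlinarith [h]
lemma hasDeriv_sq (c u : ℝ) (hu : 0 < u) :
    HasDerivWithinAt (fun u : ℝ => c^2/(4*u^2)) (-(c^2/(2*u^3))) (Set.Ioi 0) u := by
  have h1 : HasDerivAt (fun u : ℝ => u^2) (2*u) u := by
    simpa using (hasDerivAt_pow 2 u)
  have h2 : (u:ℝ)^2 ≠ 0 := by positivity
  have h3 := (h1.inv h2).const_mul (c^2/4)
  have h4 : c^2/4 * (-(2*u) / (u^2)^2) = -(c^2/(2*u^3)) := by field_simp; ring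
  have h5 : (fun u : ℝ => c^2/4 * (u^2)⁻¹) = fun u : ℝ => c^2/(4*u^2) := by
    funext v; field_simp
  rw [h4] at h3
  rw [← h5]
  exact h3.hasDerivWithinAt

lemma subst_key (c r : ℝ) (hc : 0 < c) (u : ℝ) (hu : u ∈ Set.Ioi (0:ℝ)) :
    |(-(c^2/(2*u^3)))| • ((fun s => Dker c s * Real.exp (-(s*r^2))) (c^2/(4*u^2)))
      = 2/Real.sqrt π * Real.exp (-(u^2) - (c*r/2)^2/u^2) := by
  simp only [Set.mem_Ioi] at hu
  have hπ : 0 < Real.sqrt π := Real.sqrt_pos.2 Real.pi_pos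
  have hs0 : Real.sqrt (c^2/(4*u^2)) = c/(2*u) := by
    rw [show c^2/(4*u^2) = (c/(2*u))^2 by ring]
    exact Real.sqrt_sq (by positivity)
  simp only [Dker, smul_eq_mul, hs0, abs_neg, abs_of_pos (show (0:ℝ) < c^2/(2*u^3) by positivity)]
  rw [mul_assoc (c / (2 * Real.sqrt π * (c ^ 2 / (4 * u ^ 2) * (c / (2 * u))))), ← Real.exp_add]
  rw [show -(c^2/(4*(c^2/(4*u^2)))) + -(c^2/(4*u^2)*r^2) = -(u^2) - (c*r/2)^2/u^2 by
    field_simp; ring]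
  rw [← mul_assoc]
  congr 1
  field_simp
  ring

lemma subord_integrable (c r : ℝ) (hc : 0 < c) (hr : 0 ≤ r) :
    IntegrableOn (fun s => Dker c s * Real.exp (-(s*r^2))) (Set.Ioi 0) := by
  have hiff := integrableOn_image_iff_integrableOn_abs_deriv_smul measurableSet_Ioi
    (fun x hx => hasDeriv_sq c x (Set.mem_Ioi.1 hx)) (inj_sq c hc)
    (fun s => Dker c s * Real.exp (-(s*r^2)))
  rw [img_sq c hc] at hiff
  refine hiff.2 ?_
  refine ((gl_integrable (c*r/2) (by positivity)).const_mul (2/Real.sqrt π)).congr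
    ((ae_restrict_iff' measurableSet_Ioi).2 (Filter.Eventually.of_forall fun u hu =>
      (subst_key c r hc u hu).symm))

lemma subord_eq (c r : ℝ) (hc : 0 < c) (hr : 0 ≤ r) :
    ∫ s in Set.Ioi (0:ℝ), Dker c s * Real.exp (-(s*r^2)) = Real.exp (-(c*r)) := by
  have h := integral_image_eq_integral_abs_deriv_smul measurableSet_Ioi
    (fun x hx => hasDeriv_sq c x (Set.mem_Ioi.1 hx)) (inj_sq c hc)
    (fun s => Dker c s * Real.exp (-(s*r^2)))
  rw [img_sq c hc] at h
  rw [h, setIntegral_congr_fun measurableSet_Ioi (fun u hu => subst_key c r hc u hu),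
    MeasureTheory.integral_const_mul, glasser (c*r/2) (by positivity)]
  have hπ : Real.sqrt π ≠ 0 := ne_of_gt (Real.sqrt_pos.2 Real.pi_pos)
  rw [show 2*(c*r/2) = c*r by ring]
  field_simp

lemma gram_sum_nonneg {n : ℕ} {W : Type*} (S : Finset W) (v : Fin n → W → ℝ) (b : Fin n → ℝ) :
    0 ≤ ∑ i, ∑ j, b i * b j * ∑ t ∈ S, v i t * v j t := by
  have key : ∑ i, ∑ j, b i * b j * ∑ t ∈ S, v i t * v j t = ∑ t ∈ S, (∑ i, b i * v i t)^2 := by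
    have h1 : ∀ i j : Fin n, b i * b j * ∑ t ∈ S, v i t * v j t
        = ∑ t ∈ S, (b i * v i t) * (b j * v j t) := by
      intro i j
      rw [Finset.mul_sum]
      exact Finset.sum_congr rfl fun t _ => by ring
    simp_rw [h1]
    rw [show (∑ i, ∑ j, ∑ t ∈ S, (b i * v i t) * (b j * v j t))
        = ∑ i, ∑ t ∈ S, ∑ j, (b i * v i t) * (b j * v j t) from
      Finset.sum_congr rfl fun i _ => Finset.sum_comm, Finset.sum_comm]
    refine Finset.sum_congr rfl fun t _ => ?_
    rw [sq, Finset.sum_mul_sum]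
  rw [key]
  exact Finset.sum_nonneg fun t _ => sq_nonneg _

set_option maxHeartbeats 1000000 in
lemma gram_pow_nonneg {n d : ℕ} (x : Fin n → EuclideanSpace ℝ (Fin d)) (b : Fin n → ℝ) (k : ℕ) :
    0 ≤ ∑ i, ∑ j, b i * b j * (∑ t, x i t * x j t)^k := by
  have hpow : ∀ i j : Fin n, (∑ t, x i t * x j t)^k
      = ∑ p ∈ Fintype.piFinset (fun _ : Fin k => (Finset.univ : Finset (Fin d))),
          (∏ l, x i (p l)) * (∏ l, x j (p l)) := by
    intro i j
    have h1 : (∑ t, x i t * x j t)^k = ∏ _l : Fin k, (∑ t, x i t * x j t) := by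
      rw [Finset.prod_const, Finset.card_univ, Fintype.card_fin]
    rw [h1, Finset.prod_univ_sum]
    exact Finset.sum_congr rfl fun p _ => by rw [Finset.prod_mul_distrib]
  have heq : ∑ i, ∑ j, b i * b j * (∑ t, x i t * x j t)^k
      = ∑ i, ∑ j, b i * b j * ∑ p ∈ Fintype.piFinset (fun _ : Fin k => (Finset.univ : Finset (Fin d))),
          (∏ l, x i (p l)) * (∏ l, x j (p l)) :=
    Finset.sum_congr rfl fun i _ => Finset.sum_congr rfl fun j _ => by rw [hpow i j]
  rw [heq]
  exact gram_sum_nonneg (W := Fin k → Fin d)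
    (Fintype.piFinset fun _ : Fin k => (Finset.univ : Finset (Fin d)))
    (fun i p => ∏ l, x i (p l)) b





set_option maxHeartbeats 1000000 in
lemma gauss_pos {n d : ℕ} (x : Fin n → EuclideanSpace ℝ (Fin d)) (w : Fin n → ℝ) (s : ℝ)
    (hs : 0 ≤ s) : 0 ≤ ∑ i, ∑ j, w i * w j * Real.exp (-(s * ‖x i - x j‖^2)) := by
  have hexp : ∀ y : ℝ, Real.exp y = ∑' k : ℕ, y^k / (k ! : ℝ) := by
    intro y
    rw [Real.exp_eq_exp_ℝ, NormedSpace.exp_eq_tsum_div]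
  set b : Fin n → ℝ := fun i => w i * Real.exp (-(s*‖x i‖^2)) with hb
  have hsummable : ∀ i j : Fin n, Summable (fun k : ℕ =>
      b i * b j * ((2*s)^k * (∑ t, x i t * x j t)^k / (k ! : ℝ))) := by
    intro i j
    have h := (Real.summable_pow_div_factorial (2*s*(∑ t, x i t * x j t))).mul_left (b i * b j)
    refine h.congr fun k => ?_
    rw [mul_pow]
  have hterm : ∀ i j : Fin n, w i * w j * Real.exp (-(s * ‖x i - x j‖^2))
      = ∑' k : ℕ, b i * b j * ((2*s)^k * (∑ t, x i t * x j t)^k / (k ! : ℝ)) := by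
    intro i j
    have hip : ‖x i - x j‖^2 = ‖x i‖^2 - 2*(∑ t, x i t * x j t) + ‖x j‖^2 := by
      have hin : (inner ℝ (x i) (x j) : ℝ) = ∑ t, x i t * x j t := by
        simp [PiLp.inner_apply, RCLike.inner_apply, mul_comm]
      rw [norm_sub_sq_real (x i) (x j), hin]
    have hsplit : Real.exp (-(s * ‖x i - x j‖^2))
        = Real.exp (-(s*‖x i‖^2)) * Real.exp (-(s*‖x j‖^2))
          * Real.exp (2*s*(∑ t, x i t * x j t)) := by
      rw [← Real.exp_add, ← Real.exp_add, hip]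
      congr 1
      ring
    rw [hsplit, hexp (2*s*(∑ t, x i t * x j t)), ← tsum_mul_left, ← tsum_mul_left]
    refine tsum_congr fun k => ?_
    simp only [hb]
    rw [mul_pow]
    ring
  have hstep : ∑ i, ∑ j, w i * w j * Real.exp (-(s * ‖x i - x j‖^2))
      = ∑' k : ℕ, ∑ i, ∑ j, b i * b j * ((2*s)^k * (∑ t, x i t * x j t)^k / (k ! : ℝ)) := by
    rw [show (∑ i, ∑ j, w i * w j * Real.exp (-(s * ‖x i - x j‖^2)))
        = ∑ i, ∑ j, ∑' k : ℕ, b i * b j * ((2*s)^k * (∑ t, x i t * x j t)^k / (k ! : ℝ)) from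
      Finset.sum_congr rfl fun i _ => Finset.sum_congr rfl fun j _ => hterm i j]
    rw [show (∑ i, ∑ j, ∑' k : ℕ, b i * b j * ((2*s)^k * (∑ t, x i t * x j t)^k / (k ! : ℝ)))
        = ∑ i, ∑' k : ℕ, ∑ j, b i * b j * ((2*s)^k * (∑ t, x i t * x j t)^k / (k ! : ℝ)) from
      Finset.sum_congr rfl fun i _ => (Summable.tsum_finsetSum (fun j _ => hsummable i j)).symm]
    exact (Summable.tsum_finsetSum (fun i _ => summable_sum (fun j _ => hsummable i j))).symm
  rw [hstep]
  refine tsum_nonneg fun k => ?_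
  have heq2 : ∑ i, ∑ j, b i * b j * ((2*s)^k * (∑ t, x i t * x j t)^k / (k ! : ℝ))
      = ((2*s)^k / (k ! : ℝ)) * ∑ i, ∑ j, b i * b j * (∑ t, x i t * x j t)^k := by
    rw [Finset.mul_sum]
    refine Finset.sum_congr rfl fun i _ => ?_
    rw [Finset.mul_sum]
    exact Finset.sum_congr rfl fun j _ => by ring
  rw [heq2]
  have h1 : (0:ℝ) ≤ (2*s)^k / (k ! : ℝ) := by positivity
  exact mul_nonneg h1 (gram_pow_nonneg x b k)

section
variable {n d : ℕ} (x : Fin n → EuclideanSpace ℝ (Fin d)) (w : Fin n → ℝ)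

lemma term_integrable (c : ℝ) (hc : 0 < c) (i j : Fin n) :
    IntegrableOn (fun s => w i * w j * (Dker c s * Real.exp (-(s*‖x i - x j‖^2)))) (Set.Ioi 0) := by
  exact (subord_integrable c ‖x i - x j‖ hc (norm_nonneg _)).const_mul _

lemma sum_integrable (c : ℝ) (hc : 0 < c) :
    IntegrableOn (fun s => Dker c s *
      (∑ i, ∑ j, w i * w j * Real.exp (-(s*‖x i - x j‖^2)))) (Set.Ioi 0) := by
  have h : IntegrableOn (fun s => ∑ i, ∑ j,
      w i * w j * (Dker c s * Real.exp (-(s*‖x i - x j‖^2)))) (Set.Ioi 0) :=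
    integrable_finset_sum _ fun i _ => integrable_finset_sum _ fun j _ => term_integrable x w c hc i j
  refine h.congr (Filter.Eventually.of_forall fun s => ?_)
  show (∑ i, ∑ j, w i * w j * (Dker c s * Real.exp (-(s*‖x i - x j‖^2))))
      = Dker c s * ∑ i, ∑ j, w i * w j * Real.exp (-(s*‖x i - x j‖^2))
  rw [Finset.mul_sum]
  refine Finset.sum_congr rfl fun i _ => ?_
  rw [Finset.mul_sum]
  exact Finset.sum_congr rfl fun j _ => by ring

lemma S_rep (c : ℝ) (hc : 0 < c) :
    ∑ i, ∑ j, w i * w j * Real.exp (-(c * ‖x i - x j‖))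
      = ∫ s in Set.Ioi (0:ℝ), Dker c s *
          (∑ i, ∑ j, w i * w j * Real.exp (-(s*‖x i - x j‖^2))) := by
  have h1 : ∀ i j : Fin n, w i * w j * Real.exp (-(c * ‖x i - x j‖))
      = ∫ s in Set.Ioi (0:ℝ), w i * w j * (Dker c s * Real.exp (-(s*‖x i - x j‖^2))) := by
    intro i j
    rw [MeasureTheory.integral_const_mul, subord_eq c ‖x i - x j‖ hc (norm_nonneg _)]
  rw [show (∑ i, ∑ j, w i * w j * Real.exp (-(c * ‖x i - x j‖)))
      = ∑ i, ∑ j, ∫ s in Set.Ioi (0:ℝ), w i * w j * (Dker c s * Real.exp (-(s*‖x i - x j‖^2))) from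
    Finset.sum_congr rfl fun i _ => Finset.sum_congr rfl fun j _ => h1 i j]
  rw [show (∑ i, ∑ j, ∫ s in Set.Ioi (0:ℝ), w i * w j * (Dker c s * Real.exp (-(s*‖x i - x j‖^2))))
      = ∑ i, ∫ s in Set.Ioi (0:ℝ), ∑ j, w i * w j * (Dker c s * Real.exp (-(s*‖x i - x j‖^2))) from
    Finset.sum_congr rfl fun i _ =>
      (integral_finset_sum _ fun j _ => term_integrable x w c hc i j).symm]
  rw [← integral_finset_sum _ fun i _ =>
    integrable_finset_sum _ fun j _ => term_integrable x w c hc i j]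
  refine setIntegral_congr_fun measurableSet_Ioi fun s _ => ?_
  show (∑ i, ∑ j, w i * w j * (Dker c s * Real.exp (-(s*‖x i - x j‖^2))))
      = Dker c s * ∑ i, ∑ j, w i * w j * Real.exp (-(s*‖x i - x j‖^2))
  rw [Finset.mul_sum]
  refine Finset.sum_congr rfl fun i _ => ?_
  rw [Finset.mul_sum]
  exact Finset.sum_congr rfl fun j _ => by ring

lemma Dker_subadd (c₁ c₂ s : ℝ) (h1 : 0 < c₁) (h2 : 0 < c₂) (hs : 0 < s) :
    Dker (c₁+c₂) s ≤ Dker c₁ s + Dker c₂ s := by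
  have hX : 0 < 2*Real.sqrt π*(s*Real.sqrt s) := by
    have : 0 < Real.sqrt π := Real.sqrt_pos.2 Real.pi_pos
    have : 0 < Real.sqrt s := Real.sqrt_pos.2 hs
    positivity
  have h4s : 0 < 4*s := by linarith
  have e1 : Real.exp (-((c₁+c₂)^2/(4*s))) ≤ Real.exp (-(c₁^2/(4*s))) := by
    apply Real.exp_le_exp.2
    apply neg_le_neg
    exact (div_le_div_iff_of_pos_right h4s).2 (by nlinarith)
  have e2 : Real.exp (-((c₁+c₂)^2/(4*s))) ≤ Real.exp (-(c₂^2/(4*s))) := by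
    apply Real.exp_le_exp.2
    apply neg_le_neg
    exact (div_le_div_iff_of_pos_right h4s).2 (by nlinarith)
  have hsplit : Dker (c₁+c₂) s = c₁/(2*Real.sqrt π*(s*Real.sqrt s)) * Real.exp (-((c₁+c₂)^2/(4*s)))
      + c₂/(2*Real.sqrt π*(s*Real.sqrt s)) * Real.exp (-((c₁+c₂)^2/(4*s))) := by
    rw [Dker]
    ring
  rw [hsplit, Dker, Dker]
  have k1 : (0:ℝ) ≤ c₁/(2*Real.sqrt π*(s*Real.sqrt s)) := le_of_lt (div_pos h1 hX)
  have k2 : (0:ℝ) ≤ c₂/(2*Real.sqrt π*(s*Real.sqrt s)) := le_of_lt (div_pos h2 hX)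
  exact add_le_add (mul_le_mul_of_nonneg_left e1 k1) (mul_le_mul_of_nonneg_left e2 k2)

lemma S_subadd (hw : ∑ i, w i = 0) (c₁ c₂ : ℝ) (h1 : 0 < c₁) (h2 : 0 < c₂) :
    ∑ i, ∑ j, w i * w j * Real.exp (-((c₁+c₂) * ‖x i - x j‖))
      ≤ (∑ i, ∑ j, w i * w j * Real.exp (-(c₁ * ‖x i - x j‖)))
        + ∑ i, ∑ j, w i * w j * Real.exp (-(c₂ * ‖x i - x j‖)) := by
  rw [S_rep x w c₁ h1, S_rep x w c₂ h2, S_rep x w (c₁+c₂) (by linarith)]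
  rw [← integral_add (sum_integrable x w c₁ h1) (sum_integrable x w c₂ h2)]
  refine setIntegral_mono_on (sum_integrable x w (c₁+c₂) (by linarith))
    ((sum_integrable x w c₁ h1).add (sum_integrable x w c₂ h2)) measurableSet_Ioi
    fun s hs => ?_
  simp only [Set.mem_Ioi] at hs
  have hT := gauss_pos x w s (le_of_lt hs)
  have hD := Dker_subadd c₁ c₂ s h1 h2 hs
  nlinarith [hT, hD]

lemma cnd_real (hw : ∑ i, w i = 0) (a₁ a₂ : ℝ) (h1 : 0 ≤ a₁) (h2 : 0 ≤ a₂) :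
    ∑ i, ∑ j, w i * w j * ((1 - Real.exp (-(a₁ * ‖x i - x j‖)))
      * (1 - Real.exp (-(a₂ * ‖x i - x j‖)))) ≤ 0 := by
  rcases eq_or_lt_of_le h1 with rfl | h1
  · simp
  rcases eq_or_lt_of_le h2 with rfl | h2
  · simp
  have expand : ∀ i j : Fin n, w i * w j * ((1 - Real.exp (-(a₁ * ‖x i - x j‖)))
      * (1 - Real.exp (-(a₂ * ‖x i - x j‖))))
      = w i * w j - w i * w j * Real.exp (-(a₁ * ‖x i - x j‖))
        - w i * w j * Real.exp (-(a₂ * ‖x i - x j‖))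
        + w i * w j * Real.exp (-((a₁+a₂) * ‖x i - x j‖)) := by
    intro i j
    have hmul : Real.exp (-(a₁ * ‖x i - x j‖)) * Real.exp (-(a₂ * ‖x i - x j‖))
        = Real.exp (-((a₁+a₂) * ‖x i - x j‖)) := by
      rw [← Real.exp_add]
      congr 1
      ring
    linear_combination (w i * w j) * hmul
  rw [show (∑ i, ∑ j, w i * w j * ((1 - Real.exp (-(a₁ * ‖x i - x j‖)))
      * (1 - Real.exp (-(a₂ * ‖x i - x j‖)))))
      = ∑ i, ∑ j, (w i * w j - w i * w j * Real.exp (-(a₁ * ‖x i - x j‖))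
        - w i * w j * Real.exp (-(a₂ * ‖x i - x j‖))
        + w i * w j * Real.exp (-((a₁+a₂) * ‖x i - x j‖))) from
    Finset.sum_congr rfl fun i _ => Finset.sum_congr rfl fun j _ => expand i j]
  simp only [Finset.sum_add_distrib, Finset.sum_sub_distrib]
  have hzero : ∑ i, ∑ j, w i * w j = 0 := by
    rw [← Finset.sum_mul_sum, hw]
    simp
  have hkey := S_subadd x w hw a₁ a₂ h1 h2
  linarith
end

end VariogramProof

/-- A variogram on `ℝ^d`: nonnegative at the origin, even, and conditionally negative
definite (for complex weights summing to zero, the quadratic form is real and `≤ 0`). -/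
def IsVariogram {d : ℕ} (γ : EuclideanSpace ℝ (Fin d) → ℝ) : Prop :=
  0 ≤ γ 0 ∧ (∀ ξ, γ (-ξ) = γ ξ) ∧
    ∀ (n : ℕ) (ξ : Fin n → EuclideanSpace ℝ (Fin d)) (a : Fin n → ℂ),
      (∑ i, a i) = 0 →
      (∑ i, ∑ j, a i * (γ (ξ i - ξ j) : ℂ) * (starRingEnd ℂ) (a j)).im = 0 ∧
      (∑ i, ∑ j, a i * (γ (ξ i - ξ j) : ℂ) * (starRingEnd ℂ) (a j)).re ≤ 0

/-- For any d × d matrix A and a₁, a₂ ≥ 0, the function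
ξ ↦ (1 − e^{−a₁|Aξ|})(1 − e^{−a₂|Aξ|}) is a variogram on ℝ^d. -/
theorem stmt2 (d : ℕ) (A : Matrix (Fin d) (Fin d) ℝ) (a₁ a₂ : ℝ)
    (ha₁ : 0 ≤ a₁) (ha₂ : 0 ≤ a₂) :
    IsVariogram (fun ξ : EuclideanSpace ℝ (Fin d) =>
      (1 - Real.exp (-a₁ * ‖(WithLp.equiv 2 (Fin d → ℝ)).symm (A.mulVec (WithLp.equiv 2 (Fin d → ℝ) ξ))‖)) *
      (1 - Real.exp (-a₂ * ‖(WithLp.equiv 2 (Fin d → ℝ)).symm (A.mulVec (WithLp.equiv 2 (Fin d → ℝ) ξ))‖))) := by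
  set X : EuclideanSpace ℝ (Fin d) → EuclideanSpace ℝ (Fin d) :=
    fun ξ => (WithLp.equiv 2 (Fin d → ℝ)).symm (A.mulVec (WithLp.equiv 2 (Fin d → ℝ) ξ)) with hX
  have hXsub : ∀ ξ η, X (ξ - η) = X ξ - X η := by
    intro ξ η
    simp only [hX, WithLp.equiv_apply, WithLp.ofLp_sub, Matrix.mulVec_sub, WithLp.equiv_symm_apply, WithLp.toLp_sub]
  have hX0 : X 0 = 0 := by
    simp only [hX, WithLp.equiv_apply, WithLp.ofLp_zero, Matrix.mulVec_zero, WithLp.equiv_symm_apply, WithLp.toLp_zero]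
  refine ⟨?_, ?_, ?_⟩
  · have h0 : (WithLp.equiv 2 (Fin d → ℝ)).symm (A.mulVec ((WithLp.equiv 2 (Fin d → ℝ))
        (0 : EuclideanSpace ℝ (Fin d)))) = 0 := hX0
    simp only [h0, norm_zero, mul_zero, Real.exp_zero, sub_self, zero_mul, le_refl]
  · intro ξ
    have h1 : (WithLp.equiv 2 (Fin d → ℝ)).symm (A.mulVec ((WithLp.equiv 2 (Fin d → ℝ)) (-ξ)))
        = -((WithLp.equiv 2 (Fin d → ℝ)).symm (A.mulVec ((WithLp.equiv 2 (Fin d → ℝ)) ξ))) := by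
      simp only [WithLp.equiv_apply, WithLp.ofLp_neg, Matrix.mulVec_neg, WithLp.equiv_symm_apply, WithLp.toLp_neg]
    simp only [h1, norm_neg]
  · intro n ξ a ha
    set γ : EuclideanSpace ℝ (Fin d) → ℝ := fun η =>
      (1 - Real.exp (-a₁ * ‖X η‖)) * (1 - Real.exp (-a₂ * ‖X η‖)) with hγ
    set x : Fin n → EuclideanSpace ℝ (Fin d) := fun i => X (ξ i) with hx
    have hγval : ∀ i j, γ (ξ i - ξ j)
        = (1 - Real.exp (-(a₁ * ‖x i - x j‖))) * (1 - Real.exp (-(a₂ * ‖x i - x j‖))) := by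
      intro i j
      simp only [hγ, hx, hXsub, neg_mul]
    set g : Fin n → Fin n → ℝ := fun i j => γ (ξ i - ξ j) with hg
    have hgsymm : ∀ i j, g i j = g j i := by
      intro i j
      simp only [hg, hγval, hx]
      rw [← norm_neg (x i - x j)]
      simp only [neg_sub]
      rfl
    have hre : ∀ i j, (a i * (g i j : ℂ) * (starRingEnd ℂ) (a j)).re
        = g i j * ((a i).re * (a j).re + (a i).im * (a j).im) := by
      intro i j
      simp [Complex.mul_re, Complex.mul_im]
      ring
    have him : ∀ i j, (a i * (g i j : ℂ) * (starRingEnd ℂ) (a j)).im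
        = g i j * ((a i).im * (a j).re - (a i).re * (a j).im) := by
      intro i j
      simp [Complex.mul_re, Complex.mul_im]
      ring
    have hu : ∑ i, (a i).re = 0 := by rw [← Complex.re_sum, ha, Complex.zero_re]
    have hv : ∑ i, (a i).im = 0 := by rw [← Complex.im_sum, ha, Complex.zero_im]
    constructor
    · rw [Complex.im_sum]
      rw [show (∑ i, (∑ j, a i * (γ (ξ i - ξ j) : ℂ) * (starRingEnd ℂ) (a j)).im)
          = ∑ i, ∑ j, g i j * ((a i).im * (a j).re - (a i).re * (a j).im) from
        Finset.sum_congr rfl fun i _ => by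
          rw [Complex.im_sum]; exact Finset.sum_congr rfl fun j _ => him i j]
      have hswap : ∑ i, ∑ j, g i j * ((a i).im * (a j).re)
          = ∑ i, ∑ j, g i j * ((a i).re * (a j).im) := by
        rw [Finset.sum_comm]
        refine Finset.sum_congr rfl fun i _ => Finset.sum_congr rfl fun j _ => ?_
        rw [hgsymm j i]
        ring
      rw [show (∑ i, ∑ j, g i j * ((a i).im * (a j).re - (a i).re * (a j).im))
          = (∑ i, ∑ j, g i j * ((a i).im * (a j).re))
            - ∑ i, ∑ j, g i j * ((a i).re * (a j).im) from by
        rw [← Finset.sum_sub_distrib]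
        refine Finset.sum_congr rfl fun i _ => ?_
        rw [← Finset.sum_sub_distrib]
        exact Finset.sum_congr rfl fun j _ => by ring]
      rw [hswap, sub_self]
    · rw [Complex.re_sum]
      rw [show (∑ i, (∑ j, a i * (γ (ξ i - ξ j) : ℂ) * (starRingEnd ℂ) (a j)).re)
          = ∑ i, ∑ j, g i j * ((a i).re * (a j).re + (a i).im * (a j).im) from
        Finset.sum_congr rfl fun i _ => by
          rw [Complex.re_sum]; exact Finset.sum_congr rfl fun j _ => hre i j]
      have hsplit : ∑ i, ∑ j, g i j * ((a i).re * (a j).re + (a i).im * (a j).im)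
          = (∑ i, ∑ j, (a i).re * (a j).re * g i j)
            + ∑ i, ∑ j, (a i).im * (a j).im * g i j := by
        rw [← Finset.sum_add_distrib]
        refine Finset.sum_congr rfl fun i _ => ?_
        rw [← Finset.sum_add_distrib]
        exact Finset.sum_congr rfl fun j _ => by ring
      rw [hsplit]
      have hQ1 := VariogramProof.cnd_real x (fun i => (a i).re) hu a₁ a₂ ha₁ ha₂
      have hQ2 := VariogramProof.cnd_real x (fun i => (a i).im) hv a₁ a₂ ha₁ ha₂
      simp only [hg, hγval] at *
      linarith
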